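/- arXiv:0711.4453 — 2 statements merged into one kernel-verified Lean document; each statement's English description precedes it below -/
import Mathlib

section
/- Fix τ ∈ ℍ and z ∈ ℂ with z ∉ ℤ+τℤ, 2z ∉ ℤ+τℤ. Let F₁(t) = [θ(t+z)θ'(0)/(θ(t)θ(z))] · [θ(t+2z)θ'(0)/(θ(t)θ(2z))] · [θ(t−2z)θ'(0)/(θ(t)θ(−2z))] · [θ(t−2z)θ(z)/(θ(t−z)θ(2z))]. Then F₁ has a simple pole at t = z with residue lim_{t→z} (t−z)·F₁(t) = −(θ'(0)/θ(z))² · θ(3z)θ(z)/θ(2z)². -/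
open Complex Topology Filter

/-- `q = e^{2πiτ}`. -/
noncomputable def jq (τ : ℂ) : ℂ := Complex.exp (2 * Real.pi * I * τ)


section bq
variable {τ t : ℂ}

lemma jq_norm_lt (hτ : 0 < τ.im) : ‖jq τ‖ < 1 := by
  rw [jq, Complex.norm_exp]
  have hre : (2 * (Real.pi : ℂ) * I * τ).re = -(2 * Real.pi * τ.im) := by
    simp [Complex.mul_re, Complex.mul_im]
  rw [hre]
  apply Real.exp_lt_one_iff.2
  have := Real.pi_pos
  nlinarith

lemma jq_ne_zero : jq τ ≠ 0 := Complex.exp_ne_zero _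

end bq

noncomputable def Gp (q w : ℂ) : ℂ := ∏' n : ℕ, (1 - q ^ (n + 1) * w)

section small
variable {q w : ℂ}

lemma term_norm_le (hq : ‖q‖ < 1) (hw : ‖q‖ * ‖w‖ ≤ 1 / 2) (n : ℕ) :
    ‖q ^ (n + 1) * w‖ ≤ 1 / 2 := by
  rw [norm_mul, norm_pow]
  calc ‖q‖ ^ (n + 1) * ‖w‖ ≤ ‖q‖ * ‖w‖ := by
        apply mul_le_mul_of_nonneg_right _ (norm_nonneg w)
        calc ‖q‖ ^ (n + 1) = ‖q‖ ^ n * ‖q‖ := by ring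
          _ ≤ 1 * ‖q‖ := by
            apply mul_le_mul_of_nonneg_right (pow_le_one₀ (norm_nonneg q) hq.le) (norm_nonneg q)
          _ = ‖q‖ := one_mul _
    _ ≤ 1 / 2 := hw

lemma term_ne_zero (hq : ‖q‖ < 1) (hw : ‖q‖ * ‖w‖ ≤ 1 / 2) (n : ℕ) :
    1 - q ^ (n + 1) * w ≠ 0 := by
  intro h
  have h1 : q ^ (n + 1) * w = 1 := by linear_combination -h
  have := term_norm_le hq hw n
  rw [h1, norm_one] at this
  norm_num at this

lemma summable_log (hq : ‖q‖ < 1) (hw : ‖q‖ * ‖w‖ ≤ 1 / 2) :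
    Summable (fun n : ℕ => Complex.log (1 - q ^ (n + 1) * w)) := by
  apply Summable.of_norm_bounded (g := fun n : ℕ => 3 / 2 * (‖w‖ * ‖q‖ ^ (n + 1)))
  · apply Summable.congr (((summable_geometric_of_lt_one (norm_nonneg q) hq).mul_left
      (3 / 2 * (‖w‖ * ‖q‖))))
    intro n
    ring
  · intro n
    have h2 : ‖-(q ^ (n + 1) * w)‖ ≤ 1 / 2 := by
      rw [norm_neg]; exact term_norm_le hq hw n
    have := Complex.norm_log_one_add_half_le_self h2
    have he : (1 : ℂ) + -(q ^ (n + 1) * w) = 1 - q ^ (n + 1) * w := by ring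
    rw [he] at this
    refine this.trans ?_
    rw [norm_neg, norm_mul, norm_pow]
    ring_nf
    nlinarith [norm_nonneg q, norm_nonneg w, pow_nonneg (norm_nonneg q) (n+1)]

lemma hasProd_small (hq : ‖q‖ < 1) (hw : ‖q‖ * ‖w‖ ≤ 1 / 2) :
    HasProd (fun n : ℕ => 1 - q ^ (n + 1) * w)
      (cexp (∑' n : ℕ, Complex.log (1 - q ^ (n + 1) * w))) := by
  set α := {v : ℂ // ‖q‖ * ‖v‖ ≤ 1 / 2}
  have hfn : ∀ (x : α) (n : ℕ), (1 - q ^ (n + 1) * (x : ℂ)) ≠ 0 :=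
    fun x n => term_ne_zero hq x.2 n
  have hf : ∀ x : α, Summable fun n : ℕ => Complex.log (1 - q ^ (n + 1) * (x : ℂ)) :=
    fun x => summable_log hq x.2
  exact Complex.hasProd_of_hasSum_log (fun n => hfn ⟨w, hw⟩ n) (hf ⟨w, hw⟩).hasSum

lemma Gp_small_eq (hq : ‖q‖ < 1) (hw : ‖q‖ * ‖w‖ ≤ 1 / 2) :
    Gp q w = cexp (∑' n : ℕ, Complex.log (1 - q ^ (n + 1) * w)) :=
  (hasProd_small hq hw).tprod_eq

lemma Gp_small_ne_zero (hq : ‖q‖ < 1) (hw : ‖q‖ * ‖w‖ ≤ 1 / 2) : Gp q w ≠ 0 := by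
  rw [Gp_small_eq hq hw]; exact Complex.exp_ne_zero _

lemma log_term_hasDerivAt (hq : ‖q‖ < 1) (n : ℕ) (hw : ‖q‖ * ‖w‖ ≤ 1 / 2) :
    HasDerivAt (fun y : ℂ => Complex.log (1 - q ^ (n + 1) * y))
      (-(q ^ (n + 1)) / (1 - q ^ (n + 1) * w)) w := by
  have h1 : HasDerivAt (fun y : ℂ => 1 - q ^ (n + 1) * y) (-(q ^ (n + 1))) w := by
    simpa using ((hasDerivAt_id w).const_mul (q ^ (n + 1))).const_sub 1
  refine h1.clog ?_
  rw [Complex.mem_slitPlane_iff]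
  left
  have hv : ‖q ^ (n + 1) * w‖ ≤ 1 / 2 := term_norm_le hq hw n
  have : (q ^ (n + 1) * w).re ≤ 1 / 2 := (Complex.re_le_norm _).trans hv
  simp only [Complex.sub_re, Complex.one_re]
  linarith

lemma norm_term_lb (hq : ‖q‖ < 1) (hw : ‖q‖ * ‖w‖ ≤ 1 / 2) (n : ℕ) :
    1 / 2 ≤ ‖1 - q ^ (n + 1) * w‖ := by
  have hv : ‖q ^ (n + 1) * w‖ ≤ 1 / 2 := term_norm_le hq hw n
  have := norm_sub_norm_le (1 : ℂ) (q ^ (n + 1) * w)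
  rw [norm_one] at this
  linarith

lemma Gp_differentiableOn (hq : ‖q‖ < 1) {c : ℝ} (hc0 : 0 < c) (hc : ‖q‖ * c ≤ 1 / 2) :
    DifferentiableOn ℂ (Gp q) (Metric.ball (0 : ℂ) c) := by
  have hmem : ∀ y : ℂ, y ∈ Metric.ball (0 : ℂ) c → ‖q‖ * ‖y‖ ≤ 1 / 2 := by
    intro y hy
    rw [Metric.mem_ball, dist_zero_right] at hy
    calc ‖q‖ * ‖y‖ ≤ ‖q‖ * c := mul_le_mul_of_nonneg_left hy.le (norm_nonneg q)
      _ ≤ 1 / 2 := hc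
  have key : ∀ w₀ ∈ Metric.ball (0 : ℂ) c,
      HasDerivAt (fun y : ℂ => ∑' n : ℕ, Complex.log (1 - q ^ (n + 1) * y))
        (∑' n : ℕ, -(q ^ (n + 1)) / (1 - q ^ (n + 1) * w₀)) w₀ := by
    intro w₀ hw₀
    refine hasDerivAt_tsum_of_isPreconnected (u := fun n : ℕ => 2 * (‖q‖ * ‖q‖ ^ n))
      ?_ Metric.isOpen_ball (convex_ball (0 : ℂ) c).isPreconnected
      (fun n y hy => log_term_hasDerivAt hq n (hmem y hy))
      (fun n y hy => ?_) (Metric.mem_ball_self hc0) ?_ hw₀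
    · exact ((summable_geometric_of_lt_one (norm_nonneg q) hq).mul_left _).mul_left _
    · rw [norm_div, norm_neg, norm_pow]
      have hlb := norm_term_lb hq (hmem y hy) n
      have hub : ‖q‖ ^ (n + 1) ≤ ‖q‖ * ‖q‖ ^ n := by rw [pow_succ]; ring_nf; exact le_refl _
      rw [div_le_iff₀ (by linarith : (0:ℝ) < ‖1 - q ^ (n + 1) * y‖)]
      have h2 := mul_le_mul_of_nonneg_left hlb
        (by positivity : (0:ℝ) ≤ 2 * (‖q‖ * ‖q‖ ^ n))
      rw [pow_succ] at hub ⊢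
      exact le_trans (by linarith : ‖q‖ ^ n * ‖q‖ ≤ 2 * (‖q‖ * ‖q‖ ^ n) * (1 / 2)) h2
    · exact (summable_log hq (hmem 0 (Metric.mem_ball_self hc0)))
  intro w₀ hw₀
  refine DifferentiableAt.differentiableWithinAt ?_ |>.congr
    (fun y hy => Gp_small_eq hq (hmem y hy)) (Gp_small_eq hq (hmem w₀ hw₀))
  exact (Complex.differentiable_exp.differentiableAt).comp w₀
    (key w₀ hw₀).differentiableAt

lemma exists_shift (hq : ‖q‖ < 1) (w : ℂ) : ∃ k : ℕ, ‖q‖ * ‖q ^ k * w‖ ≤ 1 / 4 := by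
  obtain ⟨k, hk⟩ := exists_pow_lt_of_lt_one
    (by positivity : (0:ℝ) < (1/4) / (‖q‖ * ‖w‖ + 1)) hq
  refine ⟨k, ?_⟩
  rw [norm_mul, norm_pow]
  have h1 : ‖q‖ * ‖w‖ < ‖q‖ * ‖w‖ + 1 := by linarith
  have h0 : (0:ℝ) < ‖q‖ * ‖w‖ + 1 := by positivity
  have := mul_le_mul hk.le (le_refl (‖q‖ * ‖w‖ + 1)) h0.le (by positivity)
  rw [div_mul_cancel₀ _ h0.ne'] at this
  nlinarith [pow_nonneg (norm_nonneg q) k, norm_nonneg q, norm_nonneg w]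

lemma Gp_hasProd_split (hq : ‖q‖ < 1) (k : ℕ) (w : ℂ)
    (hw : ‖q‖ * ‖q ^ k * w‖ ≤ 1 / 2) :
    HasProd (fun n : ℕ => 1 - q ^ (n + 1) * w)
      ((∏ i ∈ Finset.range k, (1 - q ^ (i + 1) * w)) * Gp q (q ^ k * w)) := by
  have ht := hasProd_small hq hw
  rw [← Gp_small_eq hq hw] at ht
  have hfun : (fun n : ℕ => 1 - q ^ (n + 1) * (q ^ k * w)) =
      fun n : ℕ => 1 - q ^ (n + k + 1) * w := by
    funext n; rw [pow_add, pow_add]; ring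
  rw [hfun] at ht
  exact HasProd.prod_range_mul (f := fun n : ℕ => 1 - q ^ (n + 1) * w) ht

lemma Gp_multipliable (hq : ‖q‖ < 1) (w : ℂ) :
    Multipliable (fun n : ℕ => 1 - q ^ (n + 1) * w) := by
  obtain ⟨k, hk⟩ := exists_shift hq w
  exact (Gp_hasProd_split hq k w (by linarith)).multipliable

lemma Gp_ne_zero (hq : ‖q‖ < 1) {w : ℂ} (hw : ∀ n : ℕ, 1 - q ^ (n + 1) * w ≠ 0) :
    Gp q w ≠ 0 := by
  obtain ⟨k, hk⟩ := exists_shift hq w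
  show (∏' n : ℕ, (1 - q ^ (n + 1) * w)) ≠ 0
  rw [(Gp_hasProd_split hq k w (by linarith)).tprod_eq]
  exact mul_ne_zero (Finset.prod_ne_zero_iff.2 fun i _ => hw i)
    (Gp_small_ne_zero hq (by linarith))

lemma Gp_differentiable (hq : ‖q‖ < 1) (hq0 : q ≠ 0) : Differentiable ℂ (Gp q) := by
  intro w₀
  obtain ⟨k, hk⟩ := exists_shift hq w₀
  have hqn : (0:ℝ) < ‖q‖ := norm_pos_iff.2 hq0
  set c : ℝ := 1 / (2 * ‖q‖) with hc_def
  have hc0 : 0 < c := by positivity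
  have hc : ‖q‖ * c ≤ 1 / 2 := by
    rw [hc_def, mul_one_div, div_le_div_iff₀ (by positivity) (by norm_num)]
    ring_nf
    try nlinarith
  have hmem : q ^ k * w₀ ∈ Metric.ball (0:ℂ) c := by
    rw [Metric.mem_ball, dist_zero_right]
    rw [hc_def]
    rw [lt_div_iff₀ (by positivity)]
    nlinarith [norm_nonneg (q ^ k * w₀)]
  have hdiff2 : DifferentiableAt ℂ (fun y : ℂ => Gp q (q ^ k * y)) w₀ := by
    have h1 : DifferentiableAt ℂ (Gp q) (q ^ k * w₀) :=
      (Gp_differentiableOn hq hc0 hc).differentiableAt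
        (Metric.isOpen_ball.mem_nhds hmem)
    have h2 : DifferentiableAt ℂ (fun y : ℂ => q ^ k * y) w₀ :=
      differentiableAt_id.const_mul _
    exact h1.comp w₀ h2
  have hev : ∀ᶠ y in 𝓝 w₀, ‖q‖ * ‖q ^ k * y‖ < 1 / 2 := by
    have hco : Continuous fun y : ℂ => ‖q‖ * ‖q ^ k * y‖ :=
      continuous_const.mul ((continuous_const.mul continuous_id).norm)
    have : IsOpen {y : ℂ | ‖q‖ * ‖q ^ k * y‖ < 1 / 2} :=
      isOpen_lt hco continuous_const
    exact this.mem_nhds (by simpa using lt_of_le_of_lt hk (by norm_num))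
  have heq : (fun y : ℂ => (∏ i ∈ Finset.range k, (1 - q ^ (i + 1) * y)) *
      Gp q (q ^ k * y)) =ᶠ[𝓝 w₀] Gp q := by
    filter_upwards [hev] with y hy
    exact ((Gp_hasProd_split hq k y hy.le).tprod_eq).symm
  have hdiff1 : DifferentiableAt ℂ
      (fun y : ℂ => (∏ i ∈ Finset.range k, (1 - q ^ (i + 1) * y)) *
        Gp q (q ^ k * y)) w₀ := by
    refine DifferentiableAt.mul ?_ hdiff2
    refine DifferentiableAt.fun_finsetProd fun i _ => ?_
    exact (differentiableAt_const _).sub (differentiableAt_id.const_mul _)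
  exact hdiff1.congr_of_eventuallyEq heq.symm

/-- The Jacobi theta function
`θ(t,τ) = q^{1/8} · 2 sin(πt) · ∏_{n≥1}(1−qⁿ) · ∏_{n≥1}(1−qⁿe^{2πit})(1−qⁿe^{−2πit})`,
where `q^{1/8} = e^{πiτ/4}`. -/
noncomputable def jTheta (t τ : ℂ) : ℂ :=
  Complex.exp (Real.pi * I * τ / 4) * (2 * Complex.sin (Real.pi * t)) *
    (∏' n : ℕ, (1 - jq τ ^ (n + 1))) *
    (∏' n : ℕ, (1 - jq τ ^ (n + 1) * Complex.exp (2 * Real.pi * I * t)) *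
      (1 - jq τ ^ (n + 1) * Complex.exp (-(2 * Real.pi * I * t))))

/-- `θ(t)` with `τ` fixed. -/
noncomputable def th (τ t : ℂ) : ℂ := jTheta t τ

/-- `θ'(0)`, the derivative of `θ(·,τ)` at `t = 0`. -/
noncomputable def thd (τ : ℂ) : ℂ := deriv (fun t => jTheta t τ) 0

/-- Membership in the lattice `ℤ + τℤ`. -/
def inLat (τ t : ℂ) : Prop := ∃ m n : ℤ, t = (m : ℂ) + (n : ℂ) * τ


section bq2
variable {τ t : ℂ}

lemma inLat_neg (h : inLat τ (-t)) : inLat τ t := by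
  obtain ⟨m, n, hmn⟩ := h
  exact ⟨-m, -n, by push_cast; linear_combination -hmn⟩

lemma jq_pow (n : ℕ) : jq τ ^ n = Complex.exp ((n : ℂ) * (2 * Real.pi * I * τ)) := by
  rw [jq, Complex.exp_nat_mul]

lemma factor_ne (h : ¬ inLat τ t) (n : ℕ) :
    1 - jq τ ^ (n + 1) * Complex.exp (2 * Real.pi * I * t) ≠ 0 := by
  intro h0
  have h1 : Complex.exp ((((n + 1 : ℕ)) : ℂ) * (2 * Real.pi * I * τ) + 2 * Real.pi * I * t) = 1 := by
    rw [Complex.exp_add, ← jq_pow (n + 1)]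
    linear_combination -h0
  rw [Complex.exp_eq_one_iff] at h1
  obtain ⟨m, hm⟩ := h1
  apply h
  refine ⟨m, -(n + 1 : ℤ), ?_⟩
  have hpi : (2 * (Real.pi : ℂ) * I) ≠ 0 := by
    simp [Real.pi_ne_zero, Complex.I_ne_zero]
  have : (2 * (Real.pi : ℂ) * I) * ((((n + 1 : ℕ)) : ℂ) * τ + t) =
      (2 * (Real.pi : ℂ) * I) * ((m : ℂ)) := by
    linear_combination hm
  have h2 := mul_left_cancel₀ hpi this
  push_cast at h2 ⊢
  linear_combination h2

lemma factor_ne' (h : ¬ inLat τ t) (n : ℕ) :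
    1 - jq τ ^ (n + 1) * Complex.exp (-(2 * Real.pi * I * t)) ≠ 0 := by
  have h2 : ¬ inLat τ (-t) := fun hc => h (inLat_neg (by simpa using hc))
  have := factor_ne h2 n
  rw [show 2 * (Real.pi : ℂ) * I * -t = -(2 * Real.pi * I * t) by ring] at this
  exact this

lemma factor_one_ne (hτ : 0 < τ.im) (n : ℕ) : 1 - jq τ ^ (n + 1) * (1 : ℂ) ≠ 0 := by
  intro h0
  have h1 : Complex.exp ((((n + 1 : ℕ)) : ℂ) * (2 * Real.pi * I * τ)) = 1 := by
    rw [← jq_pow (n + 1)]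
    linear_combination -h0
  rw [Complex.exp_eq_one_iff] at h1
  obtain ⟨m, hm⟩ := h1
  have hpi : (2 * (Real.pi : ℂ) * I) ≠ 0 := by
    simp [Real.pi_ne_zero, Complex.I_ne_zero]
  have h3 : (2 * (Real.pi : ℂ) * I) * ((((n + 1 : ℕ)) : ℂ) * τ) =
      (2 * (Real.pi : ℂ) * I) * ((m : ℂ)) := by linear_combination hm
  have h2 := mul_left_cancel₀ hpi h3
  have him := congrArg Complex.im h2
  push_cast at him
  simp [Complex.mul_im] at him
  rcases him with h | h
  · exact absurd h (by positivity)
  · exact absurd h hτ.ne'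

end bq2

section th
variable {τ t : ℂ}

lemma th_eq (hτ : 0 < τ.im) (t : ℂ) :
    th τ t = Complex.exp (Real.pi * I * τ / 4) * (2 * Complex.sin (Real.pi * t)) *
      Gp (jq τ) 1 *
      (Gp (jq τ) (Complex.exp (2 * Real.pi * I * t)) *
        Gp (jq τ) (Complex.exp (-(2 * Real.pi * I * t)))) := by
  have hq := jq_norm_lt hτ
  rw [th, jTheta]
  congr 1
  · congr 1
    exact (tprod_congr fun n : ℕ => by rw [mul_one]).symm
  · exact Multipliable.tprod_mul (Gp_multipliable hq _) (Gp_multipliable hq _)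

lemma th_ne_zero (hτ : 0 < τ.im) (h : ¬ inLat τ t) : th τ t ≠ 0 := by
  have hq := jq_norm_lt hτ
  rw [th_eq hτ]
  have hsin : Complex.sin (Real.pi * t) ≠ 0 := by
    intro hs
    rw [Complex.sin_eq_zero_iff] at hs
    obtain ⟨k, hk⟩ := hs
    have hpi : ((Real.pi : ℂ)) ≠ 0 := Complex.ofReal_ne_zero.2 Real.pi_ne_zero
    have ht' : t = (k : ℂ) := by
      have h2 : ((Real.pi : ℂ)) * t = ((Real.pi : ℂ)) * (k : ℂ) := by linear_combination hk
      exact mul_left_cancel₀ hpi h2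
    exact h ⟨k, 0, by simp [ht']⟩
  refine mul_ne_zero (mul_ne_zero (mul_ne_zero (Complex.exp_ne_zero _) ?_) ?_) ?_
  · exact mul_ne_zero two_ne_zero hsin
  · exact Gp_ne_zero hq (factor_one_ne hτ)
  · exact mul_ne_zero (Gp_ne_zero hq (factor_ne h)) (Gp_ne_zero hq (factor_ne' h))

lemma th_differentiable (hτ : 0 < τ.im) : Differentiable ℂ (th τ) := by
  have hq := jq_norm_lt hτ
  have hfun : th τ = fun t => Complex.exp (Real.pi * I * τ / 4) *
      (2 * Complex.sin (Real.pi * t)) * Gp (jq τ) 1 *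
      (Gp (jq τ) (Complex.exp (2 * Real.pi * I * t)) *
        Gp (jq τ) (Complex.exp (-(2 * Real.pi * I * t)))) := funext (th_eq hτ)
  rw [hfun]
  have hGp := Gp_differentiable hq (jq_ne_zero (τ := τ))
  have h1 : Differentiable ℂ fun t : ℂ => Gp (jq τ) (Complex.exp (2 * Real.pi * I * t)) := by
    apply hGp.comp
    apply Complex.differentiable_exp.comp
    exact differentiable_id.const_mul _
  have h2 : Differentiable ℂ fun t : ℂ => Gp (jq τ) (Complex.exp (-(2 * Real.pi * I * t))) := by
    apply hGp.comp
    apply Complex.differentiable_exp.comp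
    exact (differentiable_id.const_mul _).neg
  have hsin : Differentiable ℂ fun t : ℂ => Complex.sin (Real.pi * t) :=
    Complex.differentiable_sin.comp (differentiable_id.const_mul _)
  exact (((differentiable_const _).mul ((differentiable_const _).mul hsin)).mul
    (differentiable_const _)).mul (h1.mul h2)

lemma th_zero : th τ 0 = 0 := by
  rw [th, jTheta]
  simp

lemma th_neg (hτ : 0 < τ.im) (t : ℂ) : th τ (-t) = - th τ t := by
  rw [th_eq hτ, th_eq hτ]
  rw [show (Real.pi : ℂ) * (-t) = -(Real.pi * t) by ring, Complex.sin_neg]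
  rw [show 2 * (Real.pi : ℂ) * I * (-t) = -(2 * Real.pi * I * t) by ring, neg_neg]
  ring

lemma hasDerivAt_th (hτ : 0 < τ.im) : HasDerivAt (th τ) (thd τ) 0 := by
  have h := ((th_differentiable hτ) 0).hasDerivAt
  exact h

lemma thd_eq (hτ : 0 < τ.im) :
    thd τ = Complex.exp (Real.pi * I * τ / 4) * (2 * Real.pi) * Gp (jq τ) 1 *
      (Gp (jq τ) 1 * Gp (jq τ) 1) := by
  have hq := jq_norm_lt hτ
  set R : ℂ → ℂ := fun t => Gp (jq τ) (Complex.exp (2 * Real.pi * I * t)) *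
      Gp (jq τ) (Complex.exp (-(2 * Real.pi * I * t))) with hR_def
  have hGp := Gp_differentiable hq (jq_ne_zero (τ := τ))
  have hRd : DifferentiableAt ℂ R 0 := by
    apply DifferentiableAt.mul
    · exact (hGp.comp (Complex.differentiable_exp.comp
        (differentiable_id.const_mul _))).differentiableAt
    · exact (hGp.comp (Complex.differentiable_exp.comp
        ((differentiable_id.const_mul _).neg))).differentiableAt
  have hR := hRd.hasDerivAt
  have hsin : HasDerivAt (fun t : ℂ => Complex.sin (Real.pi * t)) ((Real.pi : ℂ)) 0 := by
    have hinner : HasDerivAt (fun t : ℂ => (Real.pi : ℂ) * t) ((Real.pi : ℂ)) 0 := by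
      simpa using (hasDerivAt_id (0 : ℂ)).const_mul ((Real.pi : ℂ))
    have := (Complex.hasDerivAt_sin ((Real.pi : ℂ) * 0)).comp 0 hinner
    simp only [mul_zero, Complex.cos_zero, one_mul] at this
    exact this
  set C1 : ℂ := Complex.exp (Real.pi * I * τ / 4)
  set C2 : ℂ := Gp (jq τ) 1
  have hS : HasDerivAt (fun t : ℂ => C1 * (2 * Complex.sin (Real.pi * t)) * C2)
      (C1 * (2 * (Real.pi : ℂ)) * C2) 0 := by
    have := ((hsin.const_mul (2 : ℂ)).const_mul C1).mul_const C2
    simpa [mul_assoc] using this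
  have hprod := hS.mul hR
  have hth : HasDerivAt (th τ)
      (C1 * (2 * (Real.pi : ℂ)) * C2 * R 0 +
        C1 * (2 * Complex.sin ((Real.pi : ℂ) * 0)) * C2 * deriv R 0) 0 := by
    have hfun : th τ = fun t => C1 * (2 * Complex.sin (Real.pi * t)) * C2 * R t :=
      funext (th_eq hτ)
    rw [hfun]
    exact hprod
  have hval := hth.deriv
  have hthd : thd τ = deriv (th τ) 0 := rfl
  rw [hthd, hval]
  have hR0 : R 0 = Gp (jq τ) 1 * Gp (jq τ) 1 := by
    rw [hR_def]
    norm_num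
  rw [hR0]
  have hs0 : Complex.sin ((Real.pi : ℂ) * 0) = 0 := by norm_num
  rw [hs0]
  ring

lemma thd_ne_zero (hτ : 0 < τ.im) : thd τ ≠ 0 := by
  have hq := jq_norm_lt hτ
  rw [thd_eq hτ]
  have hGp1 : Gp (jq τ) 1 ≠ 0 := Gp_ne_zero hq (factor_one_ne hτ)
  have hpi : (2 * (Real.pi : ℂ)) ≠ 0 := by
    simp [Real.pi_ne_zero]
  exact mul_ne_zero (mul_ne_zero (mul_ne_zero (Complex.exp_ne_zero _) hpi) hGp1)
    (mul_ne_zero hGp1 hGp1)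

end th

lemma resid_algebra (a b c D : ℂ) (ha : a ≠ 0) (hc : c ≠ 0) (hD : D ≠ 0) :
    a * D / (c * c) * (b * D / (c * a)) * (-c * D / (c * -a)) * (-c * c / a) * D⁻¹ =
      -((D / c) ^ 2 * (b * c / a ^ 2)) := by
  rw [inv_eq_one_div, div_mul_div_comm, div_mul_div_comm, div_mul_div_comm, div_mul_div_comm,
    div_pow, div_mul_div_comm, ← neg_div]
  rw [div_eq_div_iff]
  · ring
  · exact mul_ne_zero (mul_ne_zero (mul_ne_zero (mul_ne_zero (mul_ne_zero hc hc)
      (mul_ne_zero hc ha)) (mul_ne_zero hc (neg_ne_zero.2 ha))) ha) hD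
  · exact mul_ne_zero (pow_ne_zero 2 hc) (pow_ne_zero 2 ha)

/-- The function `F₁` arising in Case 1 of the proof of birational invariance:
`F₁(t) = [θ(t+z)θ'(0)/(θ(t)θ(z))]·[θ(t+2z)θ'(0)/(θ(t)θ(2z))]·
[θ(t−2z)θ'(0)/(θ(t)θ(−2z))]·[θ(t−2z)θ(z)/(θ(t−z)θ(2z))]`. -/
noncomputable def F₁ (τ z t : ℂ) : ℂ :=
  (th τ (t + z) * thd τ / (th τ t * th τ z)) *
  (th τ (t + 2 * z) * thd τ / (th τ t * th τ (2 * z))) *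
  (th τ (t - 2 * z) * thd τ / (th τ t * th τ (-(2 * z)))) *
  (th τ (t - 2 * z) * th τ z / (th τ (t - z) * th τ (2 * z)))

/-- `F₁` has a simple pole at `t = z` with residue
`lim_{t→z} (t−z)F₁(t) = −(θ'(0)/θ(z))²·θ(3z)θ(z)/θ(2z)²`. -/
theorem F₁_residue_at_z (τ z : ℂ) (hτ : 0 < τ.im)
    (hz : ¬ inLat τ z) (h2z : ¬ inLat τ (2 * z)) :
    Filter.Tendsto (fun t : ℂ => (t - z) * F₁ τ z t) (𝓝[≠] z)
      (𝓝 (-((thd τ / th τ z) ^ 2 * (th τ (3 * z) * th τ z / (th τ (2 * z)) ^ 2)))) := by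
  have hq := jq_norm_lt hτ
  have hcont := (th_differentiable hτ).continuous
  have hzne : th τ z ≠ 0 := th_ne_zero hτ hz
  have h2zne : th τ (2 * z) ≠ 0 := th_ne_zero hτ h2z
  have hDne : thd τ ≠ 0 := thd_ne_zero hτ
  have hneg2z : th τ (-(2 * z)) = - th τ (2 * z) := th_neg hτ (2 * z)
  have hnegz : th τ (-z) = - th τ z := th_neg hτ z
  have hm2zne : th τ (-(2 * z)) ≠ 0 := by rw [hneg2z]; exact neg_ne_zero.2 h2zne
  -- continuity pieces
  have c1 : Tendsto (fun t : ℂ => th τ (t + z)) (𝓝[≠] z) (𝓝 (th τ (2 * z))) := by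
    refine ((hcont.comp (continuous_id.add continuous_const)).tendsto' z _
      ?_).mono_left nhdsWithin_le_nhds
    show th τ (z + z) = th τ (2 * z)
    rw [two_mul]
  have c2 : Tendsto (fun t : ℂ => th τ (t + 2 * z)) (𝓝[≠] z) (𝓝 (th τ (3 * z))) := by
    refine ((hcont.comp (continuous_id.add continuous_const)).tendsto' z _
      ?_).mono_left nhdsWithin_le_nhds
    show th τ (z + 2 * z) = th τ (3 * z)
    rw [show z + 2 * z = 3 * z by ring]
  have c3 : Tendsto (fun t : ℂ => th τ (t - 2 * z)) (𝓝[≠] z) (𝓝 (th τ (-z))) := by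
    refine ((hcont.comp (continuous_id.sub continuous_const)).tendsto' z _
      ?_).mono_left nhdsWithin_le_nhds
    show th τ (z - 2 * z) = th τ (-z)
    rw [show z - 2 * z = -z by ring]
  have c4 : Tendsto (fun t : ℂ => th τ t) (𝓝[≠] z) (𝓝 (th τ z)) :=
    (hcont.tendsto z).mono_left nhdsWithin_le_nhds
  -- the singular piece
  have h5 : Tendsto (fun t : ℂ => (t - z) / th τ (t - z)) (𝓝[≠] z) (𝓝 (thd τ)⁻¹) := by
    have hslope := hasDerivAt_iff_tendsto_slope.1 (hasDerivAt_th hτ)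
    have hq2 : Tendsto (fun s : ℂ => s / th τ s) (𝓝[≠] (0:ℂ)) (𝓝 (thd τ)⁻¹) := by
      have hinv := hslope.inv₀ hDne
      refine hinv.congr fun s => ?_
      rw [slope_def_field, th_zero, sub_zero, sub_zero, inv_div]
    have hshift : Tendsto (fun t : ℂ => t - z) (𝓝[≠] z) (𝓝[≠] (0:ℂ)) := by
      refine Filter.Tendsto.inf ?_ ?_
      · exact (continuous_id.sub continuous_const).tendsto' z 0 (sub_self z)
      · refine tendsto_principal_principal.2 fun x hx => ?_
        simp only [Set.mem_compl_iff, Set.mem_singleton_iff] at hx ⊢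
        exact sub_ne_zero.2 hx
    exact hq2.comp hshift
  -- brackets
  have h1 := (c1.mul (tendsto_const_nhds (x := thd τ))).div
    (c4.mul (tendsto_const_nhds (x := th τ z))) (mul_ne_zero hzne hzne)
  have h2 := (c2.mul (tendsto_const_nhds (x := thd τ))).div
    (c4.mul (tendsto_const_nhds (x := th τ (2 * z)))) (mul_ne_zero hzne h2zne)
  have h3 := (c3.mul (tendsto_const_nhds (x := thd τ))).div
    (c4.mul (tendsto_const_nhds (x := th τ (-(2 * z))))) (mul_ne_zero hzne hm2zne)
  have h4 := (c3.mul (tendsto_const_nhds (x := th τ z))).div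
    (tendsto_const_nhds (x := th τ (2 * z))) h2zne
  have hall := ((((h1.mul h2).mul h3).mul h4).mul h5)
  have key : ∀ t : ℂ, (t - z) * F₁ τ z t =
      (th τ (t + z) * thd τ / (th τ t * th τ z)) *
      (th τ (t + 2 * z) * thd τ / (th τ t * th τ (2 * z))) *
      (th τ (t - 2 * z) * thd τ / (th τ t * th τ (-(2 * z)))) *
      (th τ (t - 2 * z) * th τ z / th τ (2 * z)) *
      ((t - z) / th τ (t - z)) := by
    intro t
    rw [F₁]
    ring
  have hlim := hall.congr fun t => (key t).symm
  have hval : th τ (2 * z) * thd τ / (th τ z * th τ z) *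
      (th τ (3 * z) * thd τ / (th τ z * th τ (2 * z))) *
      (th τ (-z) * thd τ / (th τ z * th τ (-(2 * z)))) *
      (th τ (-z) * th τ z / th τ (2 * z)) * (thd τ)⁻¹ =
      -((thd τ / th τ z) ^ 2 * (th τ (3 * z) * th τ z / (th τ (2 * z)) ^ 2)) := by
    rw [hnegz, hneg2z]
    exact resid_algebra (th τ (2 * z)) (th τ (3 * z)) (th τ z) (thd τ) h2zne hzne hDne
  rw [hval] at hlim
  exact hlim
end small
end

section
/- Fix τ ∈ ℍ, z ∈ ℂ, and a₁, a₂ ∈ ℂ with a₁ + a₂ = −2, and assume z ∉ ℤ+τℤ, 2z ∉ ℤ+τℤ, and (aᵢ+1)z ∉ ℤ+τℤ for i = 1,2. Let F₃(t) = [θ(t+z)θ'(0)/(θ(t)θ(z))]² · [θ(t−z)θ'(0)/(θ(t)θ(−z))] · [θ(t+2z)θ(z)/(θ(t+z)θ(2z))] · ∏_{i=1,2} [θ(t+(aᵢ+1)z)θ(z)/(θ(t+z)θ((aᵢ+1)z))]. Then F₃ has a simple pole at t = −z with residue lim_{t→−z} (t+z)·F₃(t) = −∏_{i=1,2} [θ(aᵢz)θ'(0)/(θ((1+aᵢ)z)θ(z))].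 -/
open Complex Topology Filter

section JTAux
open Metric Finset
namespace JT

lemma one_sub_ne_zero {x : ℂ} (h : ‖x‖ < 1) : (1:ℂ) - x ≠ 0 := by
  intro hx
  have : x = 1 := by linear_combination -hx
  rw [this] at h; simp at h

lemma slit_of_small {x : ℂ} (h : ‖x‖ < 1/2) : (1 - x) ∈ Complex.slitPlane := by
  rw [Complex.mem_slitPlane_iff]; left
  have h2 := Complex.abs_re_le_norm x
  simp only [Complex.sub_re, Complex.one_re]
  cases abs_le.1 h2 with | intro a b => linarith

lemma norm_jq_lt_one {τ : ℂ} (hτ : 0 < τ.im) : ‖jq τ‖ < 1 := by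
  rw [jq, Complex.norm_exp]
  have h : (2 * (Real.pi:ℂ) * I * τ).re = -(2 * Real.pi * τ.im) := by
    simp [Complex.mul_re, Complex.mul_im]
  rw [h, Real.exp_lt_one_iff]
  have := Real.pi_pos
  nlinarith

/-- The `n`-th factor of the theta product. -/
noncomputable def gg (τ t : ℂ) (n : ℕ) : ℂ :=
  (1 - jq τ ^ (n + 1) * Complex.exp (2 * Real.pi * I * t)) *
    (1 - jq τ ^ (n + 1) * Complex.exp (-(2 * Real.pi * I * t)))

noncomputable def PP (τ t : ℂ) : ℂ := ∏' n : ℕ, gg τ t n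

noncomputable def P1 (τ : ℂ) : ℂ := ∏' n : ℕ, (1 - jq τ ^ (n + 1))

lemma norm_term_le {τ : ℂ} {w₀ t : ℂ} (ht : t ∈ Metric.ball w₀ 1) (k : ℕ) :
    ‖jq τ ^ k * Complex.exp (2 * Real.pi * I * t)‖ ≤ ‖jq τ‖ ^ k * Real.exp (2*Real.pi*(|w₀.im|+1)) ∧
    ‖jq τ ^ k * Complex.exp (-(2 * Real.pi * I * t))‖ ≤ ‖jq τ‖ ^ k * Real.exp (2*Real.pi*(|w₀.im|+1)) := by
  have him : |t.im| ≤ |w₀.im| + 1 := by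
    have h1 : |t.im - w₀.im| ≤ ‖t - w₀‖ := by
      simpa using Complex.abs_im_le_norm (t - w₀)
    rw [mem_ball, Complex.dist_eq] at ht
    have := abs_sub_abs_le_abs_sub t.im w₀.im
    have h3 : |t.im| - |w₀.im| ≤ |t.im - w₀.im| := abs_sub_abs_le_abs_sub _ _
    linarith
  have hπ := Real.pi_pos
  constructor <;>
  · rw [norm_mul, norm_pow, Complex.norm_exp]
    refine mul_le_mul_of_nonneg_left ?_ (by positivity)
    rw [Real.exp_le_exp]
    simp only [Complex.mul_re, Complex.mul_im, Complex.neg_re]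
    simp
    cases abs_le.1 him with | intro a b => nlinarith


lemma PP_diffAt_and_ne {τ : ℂ} (hτ : 0 < τ.im) (w₀ : ℂ) :
    DifferentiableAt ℂ (PP τ) w₀ ∧ ((∀ n : ℕ, gg τ w₀ n ≠ 0) → PP τ w₀ ≠ 0) := by
  have hq0 : 0 ≤ ‖jq τ‖ := norm_nonneg _
  have hq1 : ‖jq τ‖ < 1 := norm_jq_lt_one hτ
  set q : ℂ := jq τ with hqdef
  set M : ℝ := Real.exp (2*Real.pi*(|w₀.im|+1)) with hMdef
  have hπ := Real.pi_pos
  have hM1 : (1:ℝ) ≤ M := Real.one_le_exp (by positivity)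
  have htend : Tendsto (fun n : ℕ => ‖q‖^n * M) atTop (𝓝 0) := by
    simpa using (tendsto_pow_atTop_nhds_zero_of_lt_one hq0 hq1).mul_const M
  obtain ⟨N, hN⟩ := (Filter.eventually_atTop.1
    (htend.eventually (gt_mem_nhds (by norm_num : (0:ℝ) < 1/4))))
  set B : ℕ → ℝ := fun n => ‖q‖^n * (‖q‖^(N+1) * M) with hBdef
  have hB0 : ∀ n, 0 ≤ B n := fun n => by positivity
  have hBsum : Summable B := (summable_geometric_of_lt_one hq0 hq1).mul_right _
  have hB14 : ∀ n, B n ≤ 1/4 := by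
    intro n
    have h1 : ‖q‖^n ≤ 1 := pow_le_one₀ hq0 hq1.le
    have h2 : ‖q‖^(N+1) * M < 1/4 := hN (N+1) (by omega)
    have h3 : 0 ≤ ‖q‖^(N+1) * M := by positivity
    simp only [hBdef]
    nlinarith
  -- bounds on terms over the ball
  have key : ∀ (t : ℂ), t ∈ Metric.ball w₀ 1 → ∀ n : ℕ,
      ‖q ^ (n+N+1) * Complex.exp (2 * Real.pi * I * t)‖ ≤ B n ∧
      ‖q ^ (n+N+1) * Complex.exp (-(2 * Real.pi * I * t))‖ ≤ B n := by
    intro t ht n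
    have h := norm_term_le (τ := τ) ht (n+N+1)
    have hpow : ‖q‖^(n+N+1) * M ≤ B n := by
      rw [hBdef]
      have : ‖q‖^(n+N+1) = ‖q‖^n * ‖q‖^(N+1) := by ring
      rw [this, mul_assoc]
    exact ⟨h.1.trans hpow, h.2.trans hpow⟩
  -- the log terms
  set L : ℕ → ℂ → ℂ := fun n t =>
    Complex.log (1 - q^(n+N+1) * Complex.exp (2 * Real.pi * I * t)) +
    Complex.log (1 - q^(n+N+1) * Complex.exp (-(2 * Real.pi * I * t))) with hLdef
  -- summability of logs on the ball
  have hsumL : ∀ t ∈ Metric.ball w₀ 1, Summable fun n => L n t := by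
    intro t ht
    apply Summable.of_norm_bounded (g := fun n => 3 * B n) (hBsum.mul_left 3)
    intro n
    obtain ⟨k1, k2⟩ := key t ht n
    have e1 : ‖Complex.log (1 - q^(n+N+1) * Complex.exp (2 * Real.pi * I * t))‖ ≤ (3/2) * B n := by
      have := Complex.norm_log_one_add_half_le_self (z := -(q^(n+N+1) * Complex.exp (2 * Real.pi * I * t)))
        (by rw [norm_neg]; exact k1.trans ((hB14 n).trans (by norm_num)))
      rw [← sub_eq_add_neg] at this
      refine this.trans ?_
      rw [norm_neg]
      nlinarith [hB0 n]
    have e2 : ‖Complex.log (1 - q^(n+N+1) * Complex.exp (-(2 * Real.pi * I * t)))‖ ≤ (3/2) * B n := by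
      have := Complex.norm_log_one_add_half_le_self (z := -(q^(n+N+1) * Complex.exp (-(2 * Real.pi * I * t))))
        (by rw [norm_neg]; exact k2.trans ((hB14 n).trans (by norm_num)))
      rw [← sub_eq_add_neg] at this
      refine this.trans ?_
      rw [norm_neg]
      nlinarith [hB0 n]
    calc ‖L n t‖ ≤ _ + _ := norm_add_le _ _
    _ ≤ (3/2) * B n + (3/2) * B n := add_le_add e1 e2
    _ = 3 * B n := by ring
  -- derivatives of log terms
  set D : ℕ → ℂ → ℂ := fun n y =>
    (-(q^(n+N+1) * (Complex.exp (2 * Real.pi * I * y) * (2 * Real.pi * I)))) /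
      (1 - q^(n+N+1) * Complex.exp (2 * Real.pi * I * y)) +
    (-(q^(n+N+1) * (Complex.exp (-(2 * Real.pi * I * y)) * (-(2 * Real.pi * I))))) /
      (1 - q^(n+N+1) * Complex.exp (-(2 * Real.pi * I * y))) with hDdef
  have hder : ∀ (n : ℕ) (y : ℂ), y ∈ Metric.ball w₀ 1 → HasDerivAt (L n) (D n y) y := by
    intro n y hy
    obtain ⟨k1, k2⟩ := key y hy n
    have hlin : HasDerivAt (fun t : ℂ => 2 * (Real.pi:ℂ) * I * t) (2 * Real.pi * I) y := by
      simpa using (hasDerivAt_id y).const_mul (2 * (Real.pi:ℂ) * I)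
    have hlin2 : HasDerivAt (fun t : ℂ => -(2 * (Real.pi:ℂ) * I * t)) (-(2 * Real.pi * I)) y := hlin.neg
    have h1 : HasDerivAt (fun t : ℂ => 1 - q^(n+N+1) * Complex.exp (2 * Real.pi * I * t))
        (-(q^(n+N+1) * (Complex.exp (2 * Real.pi * I * y) * (2 * Real.pi * I)))) y :=
      ((hlin.cexp.const_mul (q^(n+N+1))).const_sub 1)
    have h2 : HasDerivAt (fun t : ℂ => 1 - q^(n+N+1) * Complex.exp (-(2 * Real.pi * I * t)))
        (-(q^(n+N+1) * (Complex.exp (-(2 * Real.pi * I * y)) * (-(2 * Real.pi * I))))) y :=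
      ((hlin2.cexp.const_mul (q^(n+N+1))).const_sub 1)
    have s1 : (1 - q^(n+N+1) * Complex.exp (2 * Real.pi * I * y)) ∈ Complex.slitPlane :=
      slit_of_small (lt_of_le_of_lt k1 (lt_of_le_of_lt (hB14 n) (by norm_num)))
    have s2 : (1 - q^(n+N+1) * Complex.exp (-(2 * Real.pi * I * y))) ∈ Complex.slitPlane :=
      slit_of_small (lt_of_le_of_lt k2 (lt_of_le_of_lt (hB14 n) (by norm_num)))
    exact (h1.clog s1).add (h2.clog s2)
  have hDbound : ∀ (n : ℕ) (y : ℂ), y ∈ Metric.ball w₀ 1 → ‖D n y‖ ≤ 6 * Real.pi * B n := by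
    intro n y hy
    obtain ⟨k1, k2⟩ := key y hy n
    have hden1 : (3:ℝ)/4 ≤ ‖1 - q^(n+N+1) * Complex.exp (2 * Real.pi * I * y)‖ := by
      have := norm_sub_norm_le (1:ℂ) (q^(n+N+1) * Complex.exp (2 * Real.pi * I * y))
      have h14 := (k1.trans (hB14 n))
      simp only [norm_one] at this
      linarith
    have hden2 : (3:ℝ)/4 ≤ ‖1 - q^(n+N+1) * Complex.exp (-(2 * Real.pi * I * y))‖ := by
      have := norm_sub_norm_le (1:ℂ) (q^(n+N+1) * Complex.exp (-(2 * Real.pi * I * y)))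
      have h14 := (k2.trans (hB14 n))
      simp only [norm_one] at this
      linarith
    have hnum1 : ‖-(q^(n+N+1) * (Complex.exp (2 * Real.pi * I * y) * (2 * Real.pi * I)))‖
        ≤ B n * (2 * Real.pi) := by
      rw [norm_neg, ← mul_assoc, norm_mul]
      have h2pi : ‖(2 * (Real.pi:ℂ) * I)‖ = 2 * Real.pi := by
        simp [abs_of_pos hπ]
      rw [h2pi]
      exact mul_le_mul_of_nonneg_right k1 (by positivity)
    have hnum2 : ‖-(q^(n+N+1) * (Complex.exp (-(2 * Real.pi * I * y)) * (-(2 * Real.pi * I))))‖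
        ≤ B n * (2 * Real.pi) := by
      rw [norm_neg, ← mul_assoc, norm_mul]
      have h2pi : ‖(-(2 * (Real.pi:ℂ) * I))‖ = 2 * Real.pi := by
        simp [abs_of_pos hπ]
      rw [h2pi]
      exact mul_le_mul_of_nonneg_right k2 (by positivity)
    have e1 : ‖(-(q^(n+N+1) * (Complex.exp (2 * Real.pi * I * y) * (2 * Real.pi * I)))) /
        (1 - q^(n+N+1) * Complex.exp (2 * Real.pi * I * y))‖ ≤ (B n * (2*Real.pi)) / (3/4) := by
      rw [norm_div]
      exact div_le_div₀ (by positivity) hnum1 (by norm_num) hden1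
    have e2 : ‖(-(q^(n+N+1) * (Complex.exp (-(2 * Real.pi * I * y)) * (-(2 * Real.pi * I))))) /
        (1 - q^(n+N+1) * Complex.exp (-(2 * Real.pi * I * y)))‖ ≤ (B n * (2*Real.pi)) / (3/4) := by
      rw [norm_div]
      exact div_le_div₀ (by positivity) hnum2 (by norm_num) hden2
    calc ‖D n y‖ ≤ _ + _ := norm_add_le _ _
    _ ≤ (B n * (2*Real.pi)) / (3/4) + (B n * (2*Real.pi)) / (3/4) := add_le_add e1 e2
    _ ≤ 6 * Real.pi * B n := by nlinarith [hB0 n]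
  -- differentiability of the log-sum on the ball
  have hball : w₀ ∈ Metric.ball w₀ 1 := mem_ball_self one_pos
  have hS : ∀ y ∈ Metric.ball w₀ 1,
      HasDerivAt (fun t => ∑' n, L n t) (∑' n, D n y) y := by
    intro y hy
    exact hasDerivAt_tsum_of_isPreconnected (u := fun n => 6 * Real.pi * B n)
      (hBsum.mul_left _) isOpen_ball (convex_ball w₀ 1).isPreconnected
      hder hDbound hball (hsumL w₀ hball) hy
  -- the tail product equals exp of the log-sum
  have htail : ∀ t ∈ Metric.ball w₀ 1,
      HasProd (fun n => gg τ t (n + N)) (Complex.exp (∑' n, L n t)) := by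
    intro t ht
    have hexp := ((hsumL t ht).hasSum).cexp
    have hcongr : (Complex.exp ∘ fun n => L n t) = fun n => gg τ t (n + N) := by
      funext n
      obtain ⟨k1, k2⟩ := key t ht n
      have n1 : (1 - q^(n+N+1) * Complex.exp (2 * Real.pi * I * t)) ≠ 0 :=
        one_sub_ne_zero (lt_of_le_of_lt k1 (lt_of_le_of_lt (hB14 n) (by norm_num)))
      have n2 : (1 - q^(n+N+1) * Complex.exp (-(2 * Real.pi * I * t))) ≠ 0 :=
        one_sub_ne_zero (lt_of_le_of_lt k2 (lt_of_le_of_lt (hB14 n) (by norm_num)))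
      simp only [Function.comp, hLdef, Complex.exp_add, Complex.exp_log n1, Complex.exp_log n2]
      rfl
    rwa [hcongr] at hexp
  -- splitting of the product
  have hsplit : ∀ t ∈ Metric.ball w₀ 1,
      PP τ t = (∏ n ∈ Finset.range N, gg τ t n) * Complex.exp (∑' n, L n t) := by
    intro t ht
    rw [PP, ← Multipliable.prod_mul_tprod_nat_mul' (f := fun n => gg τ t n) (k := N)
      (htail t ht).multipliable, (htail t ht).tprod_eq]
  -- differentiability
  have hggd : ∀ (n : ℕ) (t : ℂ), DifferentiableAt ℂ (fun t => gg τ t n) t := by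
    intro n t
    unfold gg
    fun_prop
  have hdiff : DifferentiableAt ℂ (PP τ) w₀ := by
    have hΦ : DifferentiableAt ℂ
        (fun t => (∏ n ∈ Finset.range N, gg τ t n) * Complex.exp (∑' n, L n t)) w₀ := by
      refine DifferentiableAt.mul ?_ ?_
      · exact DifferentiableAt.fun_finsetProd (fun i _ => hggd i w₀)
      · exact ((hS w₀ hball).differentiableAt).cexp
    refine hΦ.congr_of_eventuallyEq ?_
    filter_upwards [isOpen_ball.mem_nhds hball] with t ht
    exact hsplit t ht
  refine ⟨hdiff, fun hne => ?_⟩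
  rw [hsplit w₀ hball]
  exact mul_ne_zero (Finset.prod_ne_zero_iff.2 fun i _ => hne i) (Complex.exp_ne_zero _)


lemma P1_ne {τ : ℂ} (hτ : 0 < τ.im) : P1 τ ≠ 0 := by
  have hq0 : 0 ≤ ‖jq τ‖ := norm_nonneg _
  have hq1 : ‖jq τ‖ < 1 := norm_jq_lt_one hτ
  set q : ℂ := jq τ with hqdef
  have htend : Tendsto (fun n : ℕ => ‖q‖^n) atTop (𝓝 0) :=
    tendsto_pow_atTop_nhds_zero_of_lt_one hq0 hq1
  obtain ⟨N, hN⟩ := Filter.eventually_atTop.1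
    (htend.eventually (gt_mem_nhds (by norm_num : (0:ℝ) < 1/2)))
  have hpow : ∀ n : ℕ, ‖q ^ (n+N+1)‖ < 1/2 := by
    intro n
    rw [norm_pow]
    calc ‖q‖^(n+N+1) ≤ ‖q‖^(N+1) := by
          apply pow_le_pow_of_le_one hq0 hq1.le; omega
    _ < 1/2 := hN (N+1) (by omega)
  have hsum : Summable fun n : ℕ => Complex.log (1 - q^(n+N+1)) := by
    apply Summable.of_norm_bounded (g := fun n => (3/2 * ‖q‖^(N+1)) * ‖q‖^n)
      ((summable_geometric_of_lt_one hq0 hq1).mul_left _)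
    intro n
    have := Complex.norm_log_one_add_half_le_self (z := -(q^(n+N+1)))
      (by rw [norm_neg]; exact (hpow n).le)
    rw [← sub_eq_add_neg, norm_neg, norm_pow] at this
    refine this.trans ?_
    have : ‖q‖^(n+N+1) = ‖q‖^(N+1) * ‖q‖^n := by ring
    rw [this]; nlinarith [pow_nonneg hq0 (N+1), pow_nonneg hq0 n]
  have htail : HasProd (fun n => 1 - q^(n+N+1)) (Complex.exp (∑' n, Complex.log (1 - q^(n+N+1)))) := by
    have hexp := hsum.hasSum.cexp
    have hcongr : (Complex.exp ∘ fun n => Complex.log (1 - q^(n+N+1))) = fun n => 1 - q^(n+N+1) := by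
      funext n
      exact Complex.exp_log (one_sub_ne_zero ((hpow n).trans (by norm_num)))
    rwa [hcongr] at hexp
  have hsplit : P1 τ = (∏ n ∈ Finset.range N, (1 - q^(n+1))) *
      Complex.exp (∑' n, Complex.log (1 - q^(n+N+1))) := by
    rw [P1, ← Multipliable.prod_mul_tprod_nat_mul' (f := fun n => 1 - q^(n+1)) (k := N)
      htail.multipliable, htail.tprod_eq]
  rw [hsplit]
  refine mul_ne_zero (Finset.prod_ne_zero_iff.2 fun i _ => ?_) (Complex.exp_ne_zero _)
  exact one_sub_ne_zero (by rw [norm_pow]; exact pow_lt_one₀ hq0 hq1 (by omega))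


lemma jTheta_eq (τ t : ℂ) : jTheta t τ =
    Complex.exp (Real.pi * I * τ / 4) * (2 * Complex.sin (Real.pi * t)) * P1 τ * PP τ t := rfl

lemma th_eq (τ t : ℂ) : th τ t =
    Complex.exp (Real.pi * I * τ / 4) * (2 * Complex.sin (Real.pi * t)) * P1 τ * PP τ t := rfl

lemma two_pi_I_ne : (2 * (Real.pi : ℂ) * I) ≠ 0 := by
  simp [Real.pi_ne_zero, Complex.I_ne_zero]

lemma gg_ne_of_not_inLat {τ w : ℂ} (hw : ¬ inLat τ w) (n : ℕ) : gg τ w n ≠ 0 := by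
  unfold gg
  apply mul_ne_zero
  · intro h
    have h1 : jq τ ^ (n+1) * Complex.exp (2*Real.pi*I*w) = 1 := by linear_combination -h
    rw [jq, ← Complex.exp_nat_mul, ← Complex.exp_add] at h1
    obtain ⟨m, hm⟩ := Complex.exp_eq_one_iff.1 h1
    refine hw ⟨m, -(n+1), ?_⟩
    have h2 : (2*(Real.pi:ℂ)*I) * ((n+1) * τ + w) = (2*(Real.pi:ℂ)*I) * ((m:ℂ) + (-(n+1):ℤ) * τ + (n+1) * τ) := by
      push_cast
      push_cast at hm
      linear_combination hm
    have h3 := mul_left_cancel₀ two_pi_I_ne h2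
    push_cast
    push_cast at h3
    linear_combination h3
  · intro h
    have h1 : jq τ ^ (n+1) * Complex.exp (-(2*Real.pi*I*w)) = 1 := by linear_combination -h
    rw [jq, ← Complex.exp_nat_mul, ← Complex.exp_add] at h1
    obtain ⟨m, hm⟩ := Complex.exp_eq_one_iff.1 h1
    refine hw ⟨-m, (n+1), ?_⟩
    have h2 : (2*(Real.pi:ℂ)*I) * ((n+1) * τ - w) = (2*(Real.pi:ℂ)*I) * ((n+1) * τ - ((-m:ℤ) + ((n+1:ℕ):ℂ) * τ)) := by
      push_cast
      push_cast at hm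
      linear_combination hm
    have h3 := mul_left_cancel₀ two_pi_I_ne h2
    push_cast
    push_cast at h3
    linear_combination -h3

lemma gg0_ne {τ : ℂ} (hτ : 0 < τ.im) (n : ℕ) : gg τ 0 n ≠ 0 := by
  have hq1 := norm_jq_lt_one hτ
  have h : (1 : ℂ) - jq τ ^ (n+1) ≠ 0 :=
    one_sub_ne_zero (by rw [norm_pow]; exact pow_lt_one₀ (norm_nonneg _) hq1 (by omega))
  unfold gg
  simp only [mul_zero, neg_zero, Complex.exp_zero, mul_one]
  exact mul_ne_zero h h

lemma PP_neg (τ w : ℂ) : PP τ (-w) = PP τ w := by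
  unfold PP
  refine tprod_congr fun n => ?_
  unfold gg
  rw [mul_neg, neg_neg]
  exact mul_comm _ _

lemma th_neg (τ w : ℂ) : th τ (-w) = - th τ w := by
  rw [th_eq, th_eq, PP_neg, mul_neg, Complex.sin_neg]
  ring

lemma th_zero (τ : ℂ) : th τ 0 = 0 := by
  rw [th_eq]
  simp

lemma th_differentiable {τ : ℂ} (hτ : 0 < τ.im) : Differentiable ℂ (th τ) := by
  have hPP : Differentiable ℂ (PP τ) := fun x => (PP_diffAt_and_ne hτ x).1
  have h1 : Differentiable ℂ (fun t : ℂ =>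
      Complex.exp (Real.pi * I * τ / 4) * (2 * Complex.sin (Real.pi * t)) * P1 τ) := by
    fun_prop
  have h2 : Differentiable ℂ (fun t : ℂ =>
      Complex.exp (Real.pi * I * τ / 4) * (2 * Complex.sin (Real.pi * t)) * P1 τ * PP τ t) :=
    h1.mul hPP
  exact h2

lemma hasDerivAt_th_zero {τ : ℂ} (hτ : 0 < τ.im) :
    HasDerivAt (th τ)
      (Complex.exp (Real.pi * I * τ / 4) * (2 * Real.pi) * P1 τ * PP τ 0) 0 := by
  have hPP : DifferentiableAt ℂ (PP τ) 0 := (PP_diffAt_and_ne hτ 0).1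
  have h1 : HasDerivAt (fun t : ℂ => (Real.pi:ℂ) * t) (Real.pi:ℂ) 0 := by
    simpa using (hasDerivAt_id (0:ℂ)).const_mul (Real.pi:ℂ)
  have hs : HasDerivAt (fun t : ℂ => Complex.sin (Real.pi * t))
      (Complex.cos ((Real.pi:ℂ) * 0) * Real.pi) 0 := h1.csin
  have hA : HasDerivAt (fun t : ℂ =>
      Complex.exp (Real.pi * I * τ / 4) * (2 * Complex.sin (Real.pi * t)) * P1 τ)
      ((Complex.exp (Real.pi * I * τ / 4) * (2 * (Complex.cos ((Real.pi:ℂ) * 0) * Real.pi))) * P1 τ) 0 :=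
    ((hs.const_mul 2).const_mul (Complex.exp (Real.pi * I * τ / 4))).mul_const (P1 τ)
  have h2 := hA.mul hPP.hasDerivAt
  have h3 : HasDerivAt (th τ)
      ((Complex.exp (Real.pi * I * τ / 4) * (2 * (Complex.cos ((Real.pi:ℂ) * 0) * Real.pi))) * P1 τ * PP τ 0
        + (Complex.exp (Real.pi * I * τ / 4) * (2 * Complex.sin ((Real.pi:ℂ) * 0)) * P1 τ) * deriv (PP τ) 0) 0 := h2
  convert h3 using 1
  simp [Complex.cos_zero, Complex.sin_zero]

lemma thd_eq {τ : ℂ} (hτ : 0 < τ.im) :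
    thd τ = Complex.exp (Real.pi * I * τ / 4) * (2 * Real.pi) * P1 τ * PP τ 0 :=
  (hasDerivAt_th_zero hτ).deriv

lemma thd_ne {τ : ℂ} (hτ : 0 < τ.im) : thd τ ≠ 0 := by
  rw [thd_eq hτ]
  refine mul_ne_zero (mul_ne_zero (mul_ne_zero (Complex.exp_ne_zero _) ?_) (P1_ne hτ)) ?_
  · simp [Real.pi_ne_zero]
  · exact (PP_diffAt_and_ne hτ 0).2 (gg0_ne hτ)

lemma sin_pi_ne {τ w : ℂ} (hw : ¬ inLat τ w) : (2 : ℂ) * Complex.sin (Real.pi * w) ≠ 0 := by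
  refine mul_ne_zero two_ne_zero ?_
  intro h
  obtain ⟨k, hk⟩ := Complex.sin_eq_zero_iff.1 h
  have hπ : (Real.pi : ℂ) ≠ 0 := Complex.ofReal_ne_zero.2 Real.pi_ne_zero
  have hwk : w = (k:ℂ) := mul_left_cancel₀ hπ (by linear_combination hk)
  exact hw ⟨k, 0, by simp [hwk]⟩

lemma th_ne {τ w : ℂ} (hτ : 0 < τ.im) (hw : ¬ inLat τ w) : th τ w ≠ 0 := by
  rw [th_eq]
  exact mul_ne_zero (mul_ne_zero (mul_ne_zero (Complex.exp_ne_zero _) (sin_pi_ne hw))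
    (P1_ne hτ)) ((PP_diffAt_and_ne hτ w).2 (gg_ne_of_not_inLat hw))

lemma val_alg (d w1 w2 w3 w4 w5 w6 : ℂ) (hd : d ≠ 0) (h1 : w1 ≠ 0) (h2 : w2 ≠ 0)
    (h5 : w5 ≠ 0) (h6 : w6 ≠ 0) :
    d⁻¹ * (d ^ 2 * -w2 * d * w1 * w3 * w4 * w1 ^ 3 / ((-w1) ^ 3 * w1 ^ 2 * -w1 * w2 * w5 * w6)) =
      -(w3 * d / (w5 * w1) * (w4 * d / (w6 * w1))) := by
  rw [inv_mul_eq_div, div_div, div_mul_div_comm, ← neg_div,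
    div_eq_div_iff (by simp [h1, h2, h5, h6, hd]) (by simp [h1, h5, h6])]
  ring

lemma key_alg (T d w1 w2 w5 w6 w7 x0 x1 x2 x3 x4 x5 : ℂ) (hx1 : x1 ≠ 0) :
    T / x1 * (d^2 * x2 * d * x3 * x4 * x5 * w1^3 / (x0^3 * w1^2 * w7 * w2 * w5 * w6)) =
    T * ((x1 * d / (x0 * w1))^2 * (x2 * d / (x0 * w7)) * (x3 * w1 / (x1 * w2)) *
      ((x4 * w1 / (x1 * w5)) * (x5 * w1 / (x1 * w6)))) := by
  have hc : x1^2 * x1⁻¹^3 = x1⁻¹ := by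
    rw [pow_succ x1⁻¹ 2, ← mul_assoc, ← mul_pow, mul_inv_cancel₀ hx1, one_pow, one_mul]
  simp only [div_eq_mul_inv, mul_inv, inv_pow, mul_pow]
  linear_combination (-(T) * d ^ 3 * x2 * x3 * x4 * x5 * w1 ^ 3 * w1⁻¹ ^ 2 * x0⁻¹ ^ 3 *
    w7⁻¹ * w2⁻¹ * w5⁻¹ * w6⁻¹) * hc

end JT
end JTAux

/-- The function `F₃` arising in Case 3 of the proof of birational invariance:
`F₃(t) = [θ(t+z)θ'(0)/(θ(t)θ(z))]²·[θ(t−z)θ'(0)/(θ(t)θ(−z))]·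
[θ(t+2z)θ(z)/(θ(t+z)θ(2z))]·∏_{i=1,2}[θ(t+(aᵢ+1)z)θ(z)/(θ(t+z)θ((aᵢ+1)z))]`. -/
noncomputable def F₃ (τ z a₁ a₂ t : ℂ) : ℂ :=
  (th τ (t + z) * thd τ / (th τ t * th τ z)) ^ 2 *
  (th τ (t - z) * thd τ / (th τ t * th τ (-z))) *
  (th τ (t + 2 * z) * th τ z / (th τ (t + z) * th τ (2 * z))) *
  ((th τ (t + (a₁ + 1) * z) * th τ z / (th τ (t + z) * th τ ((a₁ + 1) * z))) *
    (th τ (t + (a₂ + 1) * z) * th τ z / (th τ (t + z) * th τ ((a₂ + 1) * z))))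

set_option maxHeartbeats 2000000 in
/-- `F₃` has a simple pole at `t = −z` with residue
`lim_{t→−z} (t+z)F₃(t) = −∏_{i=1,2}[θ(aᵢz)θ'(0)/(θ((1+aᵢ)z)θ(z))]`. -/
theorem F₃_residue_at_neg_z (τ z a₁ a₂ : ℂ) (hτ : 0 < τ.im) (ha : a₁ + a₂ = -2)
    (hz : ¬ inLat τ z) (h2z : ¬ inLat τ (2 * z))
    (ha₁ : ¬ inLat τ ((a₁ + 1) * z)) (ha₂ : ¬ inLat τ ((a₂ + 1) * z)) :
    Filter.Tendsto (fun t : ℂ => (t + z) * F₃ τ z a₁ a₂ t) (𝓝[≠] (-z))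
      (𝓝 (-((th τ (a₁ * z) * thd τ / (th τ ((1 + a₁) * z) * th τ z)) *
        (th τ (a₂ * z) * thd τ / (th τ ((1 + a₂) * z) * th τ z))))) := by
  have hdiff := JT.th_differentiable hτ
  have hcont : Continuous (th τ) := hdiff.continuous
  have hzc : th τ z ≠ 0 := JT.th_ne hτ hz
  have hnzc : th τ (-z) ≠ 0 := by rw [JT.th_neg]; exact neg_ne_zero.2 hzc
  have h2zc : th τ (2*z) ≠ 0 := JT.th_ne hτ h2z
  have ha1c : th τ ((a₁+1)*z) ≠ 0 := JT.th_ne hτ ha₁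
  have ha2c : th τ ((a₂+1)*z) ≠ 0 := JT.th_ne hτ ha₂
  have hthd : thd τ ≠ 0 := JT.thd_ne hτ
  have hmap : Tendsto (fun t : ℂ => t + z) (𝓝[≠] (-z)) (𝓝[≠] (0:ℂ)) := by
    rw [tendsto_nhdsWithin_iff]
    constructor
    · have h0 : Tendsto (fun t : ℂ => t + z) (𝓝 (-z)) (𝓝 (-z + z)) :=
        (continuous_id.add continuous_const).tendsto _
      have h0' : Tendsto (fun t : ℂ => t + z) (𝓝 (-z)) (𝓝 0) := by simpa using h0
      exact h0'.mono_left nhdsWithin_le_nhds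
    · filter_upwards [self_mem_nhdsWithin] with t ht
      simp only [Set.mem_compl_iff, Set.mem_singleton_iff] at ht ⊢
      intro h; exact ht (by linear_combination h)
  have hder : HasDerivAt (th τ) (thd τ) 0 := by
    have h := JT.hasDerivAt_th_zero hτ
    rwa [← JT.thd_eq hτ] at h
  have hH0 : Tendsto (fun s : ℂ => s / th τ s) (𝓝[≠] (0:ℂ)) (𝓝 (thd τ)⁻¹) := by
    have h := (hasDerivAt_iff_tendsto_slope.1 hder).inv₀ hthd
    refine h.congr fun s => ?_
    rw [slope_def_field, JT.th_zero, sub_zero, sub_zero, inv_div]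
  have hH : Tendsto (fun t : ℂ => (t + z) / th τ (t + z)) (𝓝[≠] (-z)) (𝓝 (thd τ)⁻¹) :=
    hH0.comp hmap
  set G : ℂ → ℂ := fun t =>
    (thd τ)^2 * th τ (t - z) * thd τ * th τ (t + 2*z) * th τ (t + (a₁+1)*z) *
      th τ (t + (a₂+1)*z) * (th τ z)^3 /
    ((th τ t)^3 * (th τ z)^2 * th τ (-z) * th τ (2*z) * th τ ((a₁+1)*z) * th τ ((a₂+1)*z))
    with hGdef
  have hGc : Tendsto G (𝓝[≠] (-z)) (𝓝 (G (-z))) := by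
    refine Tendsto.mono_left ?_ nhdsWithin_le_nhds
    have c1 : Continuous fun t : ℂ => th τ (t - z) := hcont.comp (continuous_id.sub continuous_const)
    have c2 : Continuous fun t : ℂ => th τ (t + 2*z) := hcont.comp (continuous_id.add continuous_const)
    have c3 : Continuous fun t : ℂ => th τ (t + (a₁+1)*z) := hcont.comp (continuous_id.add continuous_const)
    have c4 : Continuous fun t : ℂ => th τ (t + (a₂+1)*z) := hcont.comp (continuous_id.add continuous_const)
    have cnum : Continuous fun t : ℂ =>
        (thd τ)^2 * th τ (t - z) * thd τ * th τ (t + 2*z) * th τ (t + (a₁+1)*z) *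
          th τ (t + (a₂+1)*z) * (th τ z)^3 :=
      (((((continuous_const.mul c1).mul continuous_const).mul c2).mul c3).mul c4).mul continuous_const
    have cden : Continuous fun t : ℂ =>
        (th τ t)^3 * (th τ z)^2 * th τ (-z) * th τ (2*z) * th τ ((a₁+1)*z) * th τ ((a₂+1)*z) :=
      (((((hcont.pow 3).mul continuous_const).mul continuous_const).mul continuous_const).mul
        continuous_const).mul continuous_const
    have hden : ((th τ (-z))^3 * (th τ z)^2 * th τ (-z) * th τ (2*z) * th τ ((a₁+1)*z) *
        th τ ((a₂+1)*z)) ≠ 0 :=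
      mul_ne_zero (mul_ne_zero (mul_ne_zero (mul_ne_zero
        (mul_ne_zero (pow_ne_zero _ hnzc) (pow_ne_zero _ hzc)) hnzc) h2zc) ha1c) ha2c
    exact ContinuousAt.div cnum.continuousAt cden.continuousAt hden
  have hval : (thd τ)⁻¹ * G (-z) =
      -((th τ (a₁ * z) * thd τ / (th τ ((1 + a₁) * z) * th τ z)) *
        (th τ (a₂ * z) * thd τ / (th τ ((1 + a₂) * z) * th τ z))) := by
    have e1 : th τ (-z - z) = - th τ (2*z) := by
      rw [show (-z - z : ℂ) = -(2*z) by ring, JT.th_neg]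
    have e2 : th τ (-z + 2*z) = th τ z := by rw [show (-z + 2*z : ℂ) = z by ring]
    have e3 : th τ (-z + (a₁+1)*z) = th τ (a₁*z) := by
      rw [show (-z + (a₁+1)*z : ℂ) = a₁*z by ring]
    have e4 : th τ (-z + (a₂+1)*z) = th τ (a₂*z) := by
      rw [show (-z + (a₂+1)*z : ℂ) = a₂*z by ring]
    have e5 : th τ ((1+a₁)*z) = th τ ((a₁+1)*z) := by
      rw [show ((1+a₁)*z : ℂ) = (a₁+1)*z by ring]
    have e6 : th τ ((1+a₂)*z) = th τ ((a₂+1)*z) := by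
      rw [show ((1+a₂)*z : ℂ) = (a₂+1)*z by ring]
    have e7 : th τ (-z) = - th τ z := JT.th_neg τ z
    simp only [hGdef, e1, e2, e3, e4, e5, e6, e7]
    set d := thd τ with hd
    set w1 := th τ z with hw1
    set w2 := th τ (2*z) with hw2
    set w3 := th τ (a₁*z) with hw3
    set w4 := th τ (a₂*z) with hw4
    set w5 := th τ ((a₁+1)*z) with hw5
    set w6 := th τ ((a₂+1)*z) with hw6
    clear_value d w1 w2 w3 w4 w5 w6
    exact JT.val_alg d w1 w2 w3 w4 w5 w6 hthd hzc h2zc ha1c ha2c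
  have hev0 : ∀ᶠ s in 𝓝[≠] (0:ℂ), th τ s ≠ 0 := by
    have h1 : ∀ᶠ s in 𝓝 (0:ℂ), JT.PP τ s ≠ 0 :=
      ((JT.PP_diffAt_and_ne hτ 0).1.continuousAt).eventually_ne
        ((JT.PP_diffAt_and_ne hτ 0).2 (JT.gg0_ne hτ))
    have h2 : ∀ᶠ s in 𝓝 (0:ℂ), ‖s‖ < 1 := by
      filter_upwards [Metric.ball_mem_nhds (0:ℂ) one_pos] with s hs
      simpa [mem_ball_zero_iff] using hs
    filter_upwards [(h1.and h2).filter_mono nhdsWithin_le_nhds, self_mem_nhdsWithin]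
      with s hs hs0
    simp only [Set.mem_compl_iff, Set.mem_singleton_iff] at hs0
    rw [JT.th_eq]
    refine mul_ne_zero (mul_ne_zero (mul_ne_zero (Complex.exp_ne_zero _) ?_)
      (JT.P1_ne hτ)) hs.1
    refine mul_ne_zero two_ne_zero ?_
    intro h
    obtain ⟨k, hk⟩ := Complex.sin_eq_zero_iff.1 h
    have hπ : (Real.pi : ℂ) ≠ 0 := Complex.ofReal_ne_zero.2 Real.pi_ne_zero
    have hsk : s = (k:ℂ) := mul_left_cancel₀ hπ (by linear_combination hk)
    have hk1 : ‖(k:ℂ)‖ < 1 := hsk ▸ hs.2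
    have hk2 : |(k:ℝ)| < 1 := by simpa using hk1
    have hk3 : k = 0 := by
      have h5 : |k| < 1 := by exact_mod_cast (by simpa [Int.cast_abs] using hk2 : ((|k| : ℤ) : ℝ) < 1)
      have h6 := abs_lt.mp h5
      omega
    exact hs0 (by rw [hsk, hk3]; simp)
  have hev1 : ∀ᶠ t in 𝓝[≠] (-z), th τ (t+z) ≠ 0 := hmap.eventually hev0
  have hev2 : ∀ᶠ t in 𝓝[≠] (-z), th τ t ≠ 0 :=
    (hcont.continuousAt.eventually_ne hnzc).filter_mono nhdsWithin_le_nhds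
  have hkey : (fun t : ℂ => ((t+z) / th τ (t+z)) * G t) =ᶠ[𝓝[≠] (-z)]
      (fun t : ℂ => (t + z) * F₃ τ z a₁ a₂ t) := by
    filter_upwards [hev1, hev2] with t h1 h2
    simp only [hGdef, F₃]
    set d := thd τ with hd
    set w1 := th τ z with hw1
    set w2 := th τ (2*z) with hw2
    set w5 := th τ ((a₁+1)*z) with hw5
    set w6 := th τ ((a₂+1)*z) with hw6
    set w7 := th τ (-z) with hw7
    set x0 := th τ t with hx0
    set x1 := th τ (t+z) with hx1
    set x2 := th τ (t-z) with hx2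
    set x3 := th τ (t+2*z) with hx3
    set x4 := th τ (t+(a₁+1)*z) with hx4
    set x5 := th τ (t+(a₂+1)*z) with hx5
    clear_value d w1 w2 w5 w6 w7 x0 x1 x2 x3 x4 x5
    exact JT.key_alg (t+z) d w1 w2 w5 w6 w7 x0 x1 x2 x3 x4 x5 h1
  have hfin := hH.mul hGc
  rw [hval] at hfin
  exact Filter.Tendsto.congr' hkey hfin
end
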